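/- Let C_1, C_2 be linear codes of length n over F_2 with C_1^⊥ ⊆ C_1 and C_2^⊥ ⊆ C_2, and let A be the 3×3 matrix over F_2 with rows (1,0,1), (1,1,0), (1,1,1). Then the matrix-product code [C_1, C_1, C_2]·A contains its Euclidean dual: ([C_1, C_1, C_2]·A)^⊥ ⊆ [C_1, C_1, C_2]·A. -/

import Mathlib

/-- The matrix-product code `[C_1,…,C_s]·A`. -/
def mpc {F : Type*} [Field F] {s l m : ℕ}
    (C : Fin s → Set (Fin m → F)) (A : Matrix (Fin s) (Fin l) F) :
    Set (Fin l × Fin m → F) :=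
  {x | ∃ c : Fin s → Fin m → F, (∀ i, c i ∈ C i) ∧
    ∀ jt : Fin l × Fin m, x jt = ∑ i, A i jt.1 * c i jt.2}

/-- The Euclidean dual of a set of vectors. -/
def dualSet {F : Type*} [CommRing F] {ι : Type*} [Fintype ι] (S : Set (ι → F)) :
    Set (ι → F) :=
  {v | ∀ c ∈ S, ∑ j, c j * v j = 0}

theorem stmt7 {n : ℕ} (C₁ C₂ : Submodule (ZMod 2) (Fin n → ZMod 2))
    (h₁ : dualSet (C₁ : Set (Fin n → ZMod 2)) ⊆ (C₁ : Set (Fin n → ZMod 2)))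
    (h₂ : dualSet (C₂ : Set (Fin n → ZMod 2)) ⊆ (C₂ : Set (Fin n → ZMod 2))) :
    dualSet (mpc ![(C₁ : Set (Fin n → ZMod 2)), ↑C₁, ↑C₂]
        (!![1,0,1; 1,1,0; 1,1,1] : Matrix (Fin 3) (Fin 3) (ZMod 2))) ⊆
      mpc ![(C₁ : Set (Fin n → ZMod 2)), ↑C₁, ↑C₂]
        (!![1,0,1; 1,1,0; 1,1,1] : Matrix (Fin 3) (Fin 3) (ZMod 2)) := by
  set A : Matrix (Fin 3) (Fin 3) (ZMod 2) := !![1,0,1; 1,1,0; 1,1,1] with hA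
  set S : Fin 3 → Set (Fin n → ZMod 2) := ![(C₁ : Set (Fin n → ZMod 2)), ↑C₁, ↑C₂] with hS
  intro v hv
  have h2 : (2 : ZMod 2) = 0 := by decide
  have hzero : ∀ i : Fin 3, (0 : Fin n → ZMod 2) ∈ S i := by
    intro i; fin_cases i <;> simp [hS]
  have key : ∀ i0 : Fin 3, ∀ c ∈ S i0,
      ∑ t, c t * (A i0 0 * v (0, t) + A i0 1 * v (1, t) + A i0 2 * v (2, t)) = 0 := by
    intro i0 c hc
    have hx : (fun jt : Fin 3 × Fin n => A i0 jt.1 * c jt.2) ∈ mpc S A := by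
      refine ⟨fun i t => if i = i0 then c t else 0, ?_, ?_⟩
      · intro i
        by_cases h : i = i0
        · subst h; simpa using hc
        · simpa [h, Pi.zero_def] using hzero i
      · intro jt
        simp [mul_ite, mul_zero, Finset.sum_ite_eq']
    have h0 := hv _ hx
    rw [Fintype.sum_prod_type, Fin.sum_univ_three] at h0
    calc ∑ t, c t * (A i0 0 * v (0, t) + A i0 1 * v (1, t) + A i0 2 * v (2, t))
        = (∑ t, A i0 0 * c t * v (0, t)) + (∑ t, A i0 1 * c t * v (1, t))
          + (∑ t, A i0 2 * c t * v (2, t)) := by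
          rw [← Finset.sum_add_distrib, ← Finset.sum_add_distrib]
          exact Finset.sum_congr rfl fun t _ => by ring
      _ = 0 := h0
  have hA00 : A 0 0 = 1 := by decide
  have hA01 : A 0 1 = 0 := by decide
  have hA02 : A 0 2 = 1 := by decide
  have hA10 : A 1 0 = 1 := by decide
  have hA11 : A 1 1 = 1 := by decide
  have hA12 : A 1 2 = 0 := by decide
  have hA20 : A 2 0 = 1 := by decide
  have hA21 : A 2 1 = 1 := by decide
  have hA22 : A 2 2 = 1 := by decide
  have hd1 : (fun t => v (0, t) + v (1, t)) ∈ (C₁ : Set (Fin n → ZMod 2)) := by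
    apply h₁
    intro c hc
    have := key 1 c (by simpa [hS] using hc)
    simpa [hA10, hA11, hA12] using this
  have hd2 : (fun t => v (0, t) + v (2, t)) ∈ (C₁ : Set (Fin n → ZMod 2)) := by
    apply h₁
    intro c hc
    have := key 0 c (by simpa [hS] using hc)
    simpa [hA00, hA01, hA02] using this
  have hd3 : (fun t => v (0, t) + v (1, t) + v (2, t)) ∈ (C₂ : Set (Fin n → ZMod 2)) := by
    apply h₂
    intro c hc
    have := key 2 c (by simpa [hS] using hc)
    simpa [hA20, hA21, hA22, add_assoc] using this
  refine ⟨![fun t => v (0, t) + v (1, t), fun t => v (0, t) + v (2, t),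
    fun t => v (0, t) + v (1, t) + v (2, t)], ?_, ?_⟩
  · intro i
    fin_cases i <;> simp [hS] <;> first | exact hd1 | exact hd2 | exact hd3
  · rintro ⟨j, t⟩
    rw [Fin.sum_univ_three]
    fin_cases j <;> simp [hA, Matrix.vecHead, Matrix.vecTail] <;>
      first
      | linear_combination (-(v ((0 : Fin 3), t)) - v ((1 : Fin 3), t) - v ((2 : Fin 3), t)) * h2
      | linear_combination (-(v ((0 : Fin 3), t)) - v ((2 : Fin 3), t)) * h2
      | linear_combination (-(v ((0 : Fin 3), t)) - v ((1 : Fin 3), t)) * h2
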